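/- Let C be a spherical cap of the unit sphere S of sufficiently small diameter, P the plane through the center of the sphere parallel to the boundary circle of C, and π : C → P the orthogonal projection. Then for every 0 < m < 1 there exists d > 0 such that if C has diameter less than d, then for all distinct points A, B ∈ C, the distance |π(A) − π(B)| > m·|A − B|. -/

import Mathlib

noncomputable section
open MeasureTheory Metric
open scoped RealInnerProductSpace

/-- The ambient Euclidean space ℝ³. -/
abbrev E3 := EuclideanSpace ℝ (Fin 3)

/-- The rotation group SO(3): orthogonal 3×3 real matrices of determinant 1. -/
def SO3 : Subgroup (Matrix.orthogonalGroup (Fin 3) ℝ) :=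
  MonoidHom.ker (Matrix.detMonoidHom.comp (Submonoid.subtype _))

instance : MeasurableSpace SO3 := borel _
instance : BorelSpace SO3 := ⟨rfl⟩

/-- The normalized surface measure on the unit sphere in ℝ³ (total mass 1):
the 2-dimensional Hausdorff measure restricted to the sphere, divided by 4π. -/
def sigma3 : Measure E3 :=
  (ENNReal.ofReal (4 * Real.pi))⁻¹ • (μH[2]).restrict (Metric.sphere 0 1)

/-- The action of a rotation on a vector of ℝ³. -/
def rot (g : SO3) (v : E3) : E3 := WithLp.toLp 2 ((g.1 : Matrix (Fin 3) (Fin 3) ℝ).mulVec v)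

set_option maxHeartbeats 1000000 in
/-- For every `0 < m < 1` there is `d > 0` such that on any spherical cap
`C = S ∩ {v | c < ⟪u, v⟫}` of diameter less than `d`, the orthogonal projection
`v ↦ v - ⟪u, v⟫ • u` onto the plane through the origin parallel to the boundary circle
of the cap contracts distances by a factor of at most `m`. -/
theorem stmt_11 (m : ℝ) (hm0 : 0 < m) (hm1 : m < 1) :
    ∃ d > 0, ∀ (u : E3), ‖u‖ = 1 → ∀ c : ℝ,
      ∀ C : Set E3, C = {v : E3 | v ∈ Metric.sphere (0 : E3) 1 ∧ c < ⟪u, v⟫} →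
      Metric.diam C < d →
      ∀ A ∈ C, ∀ B ∈ C, A ≠ B →
        dist (A - ⟪u, A⟫ • u) (B - ⟪u, B⟫ • u) > m * dist A B := by
  have hm2 : (0:ℝ) < 1 / m ^ 2 - 1 := by
    have hmp : (0:ℝ) < m ^ 2 := by positivity
    have h : 1 / m ^ 2 - 1 = (1 - m ^ 2) / m ^ 2 := by field_simp
    rw [h]
    exact div_pos (by nlinarith) hmp
  set k := Real.sqrt (1 / m ^ 2 - 1) with hkdef
  have hk : 0 < k := Real.sqrt_pos.mpr hm2
  have hksq : k ^ 2 = 1 / m ^ 2 - 1 := Real.sq_sqrt hm2.le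
  refine ⟨min 1 (k / 3), by positivity, ?_⟩
  intro u hu c C hC hdiam A hA B hB hAB
  set d := min 1 (k / 3) with hddef
  have hd0 : 0 < d := by positivity
  have hd1 : d ≤ 1 := min_le_left _ _
  have hdk3 : d ≤ k / 3 := min_le_right _ _
  have hdk : 4 * d ^ 2 < 1 / m ^ 2 - 1 := by
    have h1 : d ^ 2 ≤ (k / 3) ^ 2 := pow_le_pow_left₀ hd0.le hdk3 2
    have h2 : (0:ℝ) < k ^ 2 := pow_pos hk 2
    linarith [hksq]
  -- basic membership facts
  have hAmem := hC ▸ hA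
  have hBmem := hC ▸ hB
  obtain ⟨hAs, hAc⟩ := hAmem
  obtain ⟨hBs, hBc⟩ := hBmem
  have hAn : ‖A‖ = 1 := by simpa using hAs
  have hBn : ‖B‖ = 1 := by simpa using hBs
  have hc1 : c < 1 := by
    have := real_inner_le_norm u A
    rw [hu, hAn] at this; linarith
  have huC : u ∈ C := by
    rw [hC]
    refine ⟨by simpa using hu, ?_⟩
    rw [real_inner_self_eq_norm_sq, hu]; simpa using hc1
  have hbd : Bornology.IsBounded C := by
    rw [hC]
    exact (Metric.isBounded_sphere).subset (fun x hx => hx.1)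
  have hdistA : dist A u < d := lt_of_le_of_lt (dist_le_diam_of_mem hbd hA huC) hdiam
  have hdistB : dist B u < d := lt_of_le_of_lt (dist_le_diam_of_mem hbd hB huC) hdiam
  set a := ⟪u, A⟫ with hadef
  set b := ⟪u, B⟫ with hbdef
  have hua : ⟪A, u⟫ = a := real_inner_comm u A
  have hub : ⟪B, u⟫ = b := real_inner_comm u B
  have huu : ⟪u, u⟫ = 1 := by rw [real_inner_self_eq_norm_sq, hu]; norm_num
  -- bounds on a, b
  have hAu : ‖A - u‖ ^ 2 = 2 - 2 * a := by
    rw [norm_sub_sq_real, hua, hAn, hu]; ring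
  have hBu : ‖B - u‖ ^ 2 = 2 - 2 * b := by
    rw [norm_sub_sq_real, hub, hBn, hu]; ring
  have ha1 : a ≤ 1 := by
    have := real_inner_le_norm u A; rw [hu, hAn] at this; linarith
  have hb1 : b ≤ 1 := by
    have := real_inner_le_norm u B; rw [hu, hBn] at this; linarith
  have ha_lb : 1 - d ^ 2 / 2 ≤ a := by
    have h1 : ‖A - u‖ ^ 2 < d ^ 2 := by
      have : ‖A - u‖ < d := by rwa [dist_eq_norm] at hdistA
      nlinarith [norm_nonneg (A - u)]
    linarith [hAu.symm.trans_lt h1]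
  have hb_lb : 1 - d ^ 2 / 2 ≤ b := by
    have h1 : ‖B - u‖ ^ 2 < d ^ 2 := by
      have : ‖B - u‖ < d := by rwa [dist_eq_norm] at hdistB
      nlinarith [norm_nonneg (B - u)]
    linarith [hBu.symm.trans_lt h1]
  have hab1 : 1 ≤ a + b := by nlinarith
  -- projections
  set pA := A - a • u with hpAdef
  set pB := B - b • u with hpBdef
  have hpAn : ‖pA‖ ^ 2 = 1 - a ^ 2 := by
    rw [hpAdef, norm_sub_sq_real, inner_smul_right, hua, norm_smul, hAn, hu]
    simp [Real.norm_eq_abs, sq_abs]; ring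
  have hpBn : ‖pB‖ ^ 2 = 1 - b ^ 2 := by
    rw [hpBdef, norm_sub_sq_real, inner_smul_right, hub, norm_smul, hBn, hu]
    simp [Real.norm_eq_abs, sq_abs]; ring
  have hpA_le : ‖pA‖ ≤ d := by
    have : ‖pA‖ ^ 2 ≤ d ^ 2 := by rw [hpAn]; nlinarith
    nlinarith [norm_nonneg pA]
  have hpB_le : ‖pB‖ ≤ d := by
    have : ‖pB‖ ^ 2 ≤ d ^ 2 := by rw [hpBn]; nlinarith
    nlinarith [norm_nonneg pB]
  -- Pythagoras
  have hP : ‖pA - pB‖ ^ 2 = ‖A - B‖ ^ 2 - (a - b) ^ 2 := by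
    have h1 : pA - pB = (A - B) - (a - b) • u := by
      rw [hpAdef, hpBdef, sub_smul]; abel
    have h2 : ⟪A - B, u⟫ = a - b := by
      rw [inner_sub_left, hua, hub]
    rw [h1, norm_sub_sq_real, inner_smul_right, h2, norm_smul, hu]
    simp [Real.norm_eq_abs, sq_abs]; ring
  -- bound on a - b
  have habs : |a - b| * (a + b) ≤ ‖pA - pB‖ * (2 * d) := by
    have h1 : |a - b| * (a + b) = |(‖pB‖ - ‖pA‖)| * (‖pB‖ + ‖pA‖) := by
      have hnn : 0 ≤ ‖pB‖ + ‖pA‖ := by positivity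
      rw [← abs_of_nonneg hnn, ← abs_mul, ← abs_of_nonneg (by linarith : (0:ℝ) ≤ a + b),
        ← abs_mul]
      congr 1
      linear_combination hpAn - hpBn
    rw [h1]
    have h2 : |(‖pB‖ - ‖pA‖)| ≤ ‖pA - pB‖ := by
      rw [show pA - pB = -(pB - pA) by abel, norm_neg]
      exact abs_norm_sub_norm_le _ _
    have h3 : ‖pB‖ + ‖pA‖ ≤ 2 * d := by linarith
    exact mul_le_mul h2 h3 (by positivity) (norm_nonneg _)
  have habs2 : |a - b| ≤ 2 * d * ‖pA - pB‖ := by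
    have h1 : |a - b| * 1 ≤ |a - b| * (a + b) :=
      mul_le_mul_of_nonneg_left hab1 (abs_nonneg _)
    linarith [habs]
  have habsq : (a - b) ^ 2 ≤ 4 * d ^ 2 * ‖pA - pB‖ ^ 2 := by
    have h1 := mul_self_le_mul_self (abs_nonneg (a - b)) habs2
    have h2 : |a - b| * |a - b| = (a - b) ^ 2 := by
      rw [← abs_mul, abs_mul_self]; ring
    calc (a - b) ^ 2 = |a - b| * |a - b| := h2.symm
      _ ≤ (2 * d * ‖pA - pB‖) * (2 * d * ‖pA - pB‖) := h1
      _ = 4 * d ^ 2 * ‖pA - pB‖ ^ 2 := by ring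
  -- conclude
  have hABpos : 0 < ‖A - B‖ := by
    rw [norm_pos_iff, sub_ne_zero]; exact hAB
  have hppos : 0 < ‖pA - pB‖ := by
    rcases (norm_nonneg (pA - pB)).lt_or_eq with h | h
    · exact h
    · exfalso
      have hn : ‖pA - pB‖ ^ 2 = 0 := by rw [← h]; ring
      have hz : 4 * d ^ 2 * ‖pA - pB‖ ^ 2 = 0 := by rw [hn]; ring
      have hABsq : 0 < ‖A - B‖ ^ 2 := pow_pos hABpos 2
      linarith [habsq, hP]
  have hkey : (m * ‖A - B‖) ^ 2 < ‖pA - pB‖ ^ 2 := by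
    have h1 : ‖A - B‖ ^ 2 ≤ (1 + 4 * d ^ 2) * ‖pA - pB‖ ^ 2 := by linarith [hP, habsq]
    have h2 : (1 + 4 * d ^ 2) < 1 / m ^ 2 := by linarith
    have hmsq : (0:ℝ) < m ^ 2 := by positivity
    have h3 : m ^ 2 * ‖A - B‖ ^ 2 ≤ m ^ 2 * ((1 + 4 * d ^ 2) * ‖pA - pB‖ ^ 2) :=
      mul_le_mul_of_nonneg_left h1 hmsq.le
    have h4 : m ^ 2 * ((1 + 4 * d ^ 2) * ‖pA - pB‖ ^ 2) < m ^ 2 * (1 / m ^ 2 * ‖pA - pB‖ ^ 2) :=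
      mul_lt_mul_of_pos_left (mul_lt_mul_of_pos_right h2 (pow_pos hppos 2)) hmsq
    have h5 : m ^ 2 * (1 / m ^ 2 * ‖pA - pB‖ ^ 2) = ‖pA - pB‖ ^ 2 := by
      field_simp
    rw [mul_pow]
    linarith
  have hfin : m * ‖A - B‖ < ‖pA - pB‖ :=
    lt_of_pow_lt_pow_left₀ 2 (norm_nonneg _) hkey
  rw [dist_eq_norm, dist_eq_norm]
  calc m * ‖A - B‖ < ‖pA - pB‖ := hfin
    _ = ‖A - ⟪u, A⟫ • u - (B - ⟪u, B⟫ • u)‖ := by rw [hpAdef, hpBdef]
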